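/- arXiv:1206.6114 — 2 statements merged into one kernel-verified Lean document; each statement's English description precedes it below -/
import Mathlib

section
/- There are positive constants v, C₁ and C₂, independent of N, such that for every N ≥ 1 and every ξ ∈ ℕ^N, the Fleming-Viot generator applied to ψ satisfies L^N ψ(ξ) ≤ −v ψ(ξ) + C₁ R²(ξ)/N + C₂, where v = −∑_{ℓ≥−1} ℓ p(ℓ+1) is the subcritical drift of the driving Galton-Watson process. -/
open MeasureTheory Filter Topology Set

noncomputable section

/-- Jump rates of the continuous-time Galton-Watson process: from `x ≥ 1`,
jump to `x - 1` at rate `x p(0)` and to `y > x` at rate `x p(y - x + 1)`;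
the state `0` is absorbing. -/
def gwRate (p : ℕ → ℝ) (x y : ℕ) : ℝ :=
  if 1 ≤ x ∧ y + 1 = x then (x : ℝ) * p 0
  else if 1 ≤ x ∧ x < y then (x : ℝ) * p (y - x + 1)
  else 0

/-- The offspring law: a probability on ℕ with a finite positive exponential
moment and negative (subcritical) drift `-v = ∑_{ℓ ≥ -1} ℓ p(ℓ+1) < 0`. -/
structure OffspringLaw (p : ℕ → ℝ) (σ v : ℝ) : Prop where
  nonneg : ∀ k, 0 ≤ p k
  total : ∑' k : ℕ, p k = 1
  sigma_pos : 0 < σ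
  expMoment : Summable fun k : ℕ => p k * Real.exp (σ * k)
  v_pos : 0 < v
  drift : ∑' k : ℕ, ((k : ℝ) - 1) * p k = -v

/-- Empirical distribution of an `N`-particle configuration. -/
def emp (N : ℕ) (x : ℕ) (ξ : Fin N → ℕ) : ℝ :=
  (N : ℝ)⁻¹ * ∑ i : Fin N, (if ξ i = x then (1 : ℝ) else 0)

/-- Fleming-Viot generator for general driving rates `q`. -/
def fvGenQ (q : ℕ → ℕ → ℝ) (N : ℕ) (f : (Fin N → ℕ) → ℝ) (ξ : Fin N → ℕ) : ℝ :=
  ∑ i : Fin N, ∑' y : ℕ,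
    (if 1 ≤ y then
        q (ξ i) y + q (ξ i) 0 * ((N : ℝ) / ((N : ℝ) - 1)) * emp N y ξ
      else 0) * (f (Function.update ξ i y) - f ξ)

/-- Fleming-Viot generator driven by the Galton-Watson rates. -/
def fvGen (p : ℕ → ℝ) (N : ℕ) : ((Fin N → ℕ) → ℝ) → (Fin N → ℕ) → ℝ :=
  fvGenQ (gwRate p) N

/-- Bounded real observables. -/
def Bounded {S : Type*} (f : S → ℝ) : Prop := ∃ C, ∀ x, |f x| ≤ C

/-- A Markov transition semigroup on a measurable state space. -/
structure MarkovSemigroup (S : Type*) [MeasurableSpace S] where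
  P : ℝ → S → Measure S
  meas : ∀ t, Measurable (P t)
  prob : ∀ t x, IsProbabilityMeasure (P t x)
  init : ∀ x, P 0 x = Measure.dirac x
  semigroup : ∀ s t : ℝ, 0 ≤ s → 0 ≤ t → ∀ x, P (s + t) x = (P s x).bind (P t)

/-- `K` is the transition semigroup of the `N`-particle Fleming-Viot process
driven by the rates `q`: it solves the Kolmogorov equation for the
Fleming-Viot generator on bounded observables. -/
def IsFVQSemigroup (q : ℕ → ℕ → ℝ) (N : ℕ) (K : MarkovSemigroup (Fin N → ℕ)) : Prop :=
  ∀ f : (Fin N → ℕ) → ℝ, Bounded f → Measurable f → ∀ ξ, ∀ t : ℝ, 0 ≤ t →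
    HasDerivWithinAt (fun u => ∫ η, f η ∂ K.P u ξ)
      (∫ η, fvGenQ q N f η ∂ K.P t ξ) (Set.Ici 0) t

/-- `K` is the `N`-particle Fleming-Viot semigroup driven by Galton-Watson. -/
def IsFVSemigroup (p : ℕ → ℝ) (N : ℕ) (K : MarkovSemigroup (Fin N → ℕ)) : Prop :=
  IsFVQSemigroup (gwRate p) N K

/-- Invariant (stationary) measure of a Markov semigroup. -/
def Invariant {S : Type*} [MeasurableSpace S] (K : MarkovSemigroup S) (μ : Measure S) : Prop :=
  ∀ t : ℝ, 0 ≤ t → μ.bind (K.P t) = μ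

/-- Transition probabilities of the Galton-Watson process (absorbed at 0),
characterized by the Kolmogorov backward equations. -/
structure GWTransition (p : ℕ → ℝ) where
  pt : ℝ → ℕ → ℕ → ℝ
  nonneg : ∀ t x y, 0 ≤ pt t x y
  total : ∀ t x, 0 ≤ t → ∑' y : ℕ, pt t x y = 1
  init : ∀ x y, pt 0 x y = if y = x then 1 else 0
  backward : ∀ x y, ∀ t : ℝ, 0 ≤ t →
    HasDerivWithinAt (fun s => pt s x y)
      (∑' z : ℕ, gwRate p x z * (pt t z y - pt t x y)) (Set.Ici 0) t

/-- The law at time `t` of the process started from `μ`, conditioned on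
non-absorption up to time `t`. -/
def condLaw (pt : ℝ → ℕ → ℕ → ℝ) (μ : ℕ → ℝ) (t : ℝ) (y : ℕ) : ℝ :=
  (∑' x : ℕ, μ x * pt t x y) /
    ∑' x : ℕ, ∑' z : ℕ, (if 1 ≤ z then μ x * pt t x z else 0)

def diracOne : ℕ → ℝ := fun x => if x = 1 then 1 else 0

/-- `ν` is the Yaglom limit (the minimal quasi-stationary distribution). -/
def IsYaglomLimit (pt : ℝ → ℕ → ℕ → ℝ) (ν : ℕ → ℝ) : Prop :=
  ∀ y : ℕ, Tendsto (fun t => condLaw pt diracOne t y) atTop (𝓝 (ν y))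

/-- Position of the rightmost particle. -/
def rmax (N : ℕ) (ξ : Fin N → ℕ) : ℕ := Finset.univ.sup ξ

/-- Ratio of the second to the first empirical moment. -/
def psiFun (N : ℕ) (ξ : Fin N → ℕ) : ℝ :=
  (∑ i : Fin N, (ξ i : ℝ) ^ 2) / ∑ i : Fin N, (ξ i : ℝ)

/-- Configurations of the multitype branching process: `ζ (i, x)` is the
number of type-`i` individuals at site `x`. -/
abbrev BConf (N : ℕ) := Fin N × ℕ → ℕ

/-- Total number of individuals. -/
def bTotal (N : ℕ) (ζ : BConf N) : ENNReal := ∑' w : Fin N × ℕ, (ζ w : ENNReal)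

/-- Rightmost occupied site. -/
def bRmax (N : ℕ) (ζ : BConf N) : ℕ := sSup {x : ℕ | ∃ i, ζ (i, x) ≠ 0}

/-- Move one type-`i` individual from `x` to `y`. -/
def bJump (N : ℕ) (ζ : BConf N) (i : Fin N) (x y : ℕ) : BConf N :=
  fun w => if w = (i, x) then ζ w - 1 else if w = (i, y) then ζ w + 1 else ζ w

/-- Every type-`j` individual gives birth to a type-`i` individual at its own
position. -/
def bBranch (N : ℕ) (ζ : BConf N) (i j : Fin N) : BConf N :=
  fun w => if w.1 = i then ζ w + ζ (j, w.2) else ζ w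

/-- Generator of the multitype branching Markov process. -/
def branchGen (q : ℕ → ℕ → ℝ) (qbar : ℝ) (N : ℕ) (f : BConf N → ℝ) (ζ : BConf N) : ℝ :=
  (∑' w : (Fin N × ℕ) × ℕ,
      (ζ w.1 : ℝ) * (if w.2 ≠ 0 ∧ w.2 ≠ w.1.2 then q w.1.2 w.2 else 0) *
        (f (bJump N ζ w.1.1 w.1.2 w.2) - f ζ))
    + ∑ i : Fin N, ∑ j : Fin N,
        (if j ≠ i then qbar / ((N : ℝ) - 1) * (f (bBranch N ζ i j) - f ζ) else 0)

def IsBranchSemigroup (q : ℕ → ℕ → ℝ) (qbar : ℝ) (N : ℕ)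
    (B : MarkovSemigroup (BConf N)) : Prop :=
  ∀ f : BConf N → ℝ, Bounded f → Measurable f → ∀ ζ, ∀ t : ℝ, 0 ≤ t →
    HasDerivWithinAt (fun u => ∫ η, f η ∂ B.P u ζ)
      (∫ η, branchGen q qbar N f η ∂ B.P t ζ) (Set.Ici 0) t

/-- Generator of the single-particle motion with jumps to `0` suppressed. -/
def tildeGen (q : ℕ → ℕ → ℝ) (f : ℕ → ℝ) (x : ℕ) : ℝ :=
  ∑' y : ℕ, (if y ≠ 0 ∧ y ≠ x then q x y else 0) * (f y - f x)

def IsTildeSemigroup (q : ℕ → ℕ → ℝ) (T : MarkovSemigroup ℕ) : Prop :=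
  ∀ f : ℕ → ℝ, Bounded f → ∀ x, ∀ t : ℝ, 0 ≤ t →
    HasDerivWithinAt (fun u => ∫ y, f y ∂ T.P u x)
      (∫ y, tildeGen q f y ∂ T.P t x) (Set.Ici 0) t

/-- Generator of the Galton-Watson process together with its cumulative birth
counter: from `(z, b)`, jump to `(z + k - 1, b + k)` at rate `z p(k)`. -/
def gwbGen (p : ℕ → ℝ) (f : ℕ × ℕ → ℝ) (w : ℕ × ℕ) : ℝ :=
  ∑' k : ℕ, (w.1 : ℝ) * p k * (f (w.1 + k - 1, w.2 + k) - f w)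

def IsGWBSemigroup (p : ℕ → ℝ) (W : MarkovSemigroup (ℕ × ℕ)) : Prop :=
  ∀ f : ℕ × ℕ → ℝ, Bounded f → ∀ w, ∀ t : ℝ, 0 ≤ t →
    HasDerivWithinAt (fun u => ∫ z, f z ∂ W.P u w)
      (∫ z, gwbGen p f z ∂ W.P t w) (Set.Ici 0) t

/-- `E[exp(σ' H¹)] < ∞`, where `H¹ = 1 + (total number of births)` of the
Galton-Watson process started from one individual; the total number of births
is the increasing limit of the birth counter. -/
def HMomentFinite (W : MarkovSemigroup (ℕ × ℕ)) (σ' : ℝ) : Prop :=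
  ∃ M : ℝ, ∀ t : ℝ, 0 ≤ t →
    ∫⁻ w, ENNReal.ofReal (Real.exp (σ' * (1 + (w.2 : ℝ)))) ∂ W.P t (1, 0)
      ≤ ENNReal.ofReal M

/-- The class `F` of test functions: `∑_ℓ e^{-ρℓ} |f(ℓ)| < ∞` for some `ρ < σ'`. -/
def MemF (σ' : ℝ) (f : ℕ → ℝ) : Prop :=
  ∃ ρ : ℝ, ρ < σ' ∧ Summable fun ℓ : ℕ => Real.exp (-ρ * ℓ) * |f ℓ|

/-- Galton-Watson semigroup `S_t f(x) = E f(Z^x_t)`, read off from the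
birth-counting process. -/
def gwS (W : MarkovSemigroup (ℕ × ℕ)) (t : ℝ) (f : ℕ → ℝ) (x : ℕ) : ℝ :=
  ∫ w, f w.1 ∂ W.P t (x, 0)

/-- Galton-Watson generator `Q f(x) = ∑_{ℓ ≥ -1} x p(ℓ+1) (f(x+ℓ) - f(x))`. -/
def gwQ (p : ℕ → ℝ) (f : ℕ → ℝ) (x : ℕ) : ℝ :=
  ∑' k : ℕ, (x : ℝ) * p k * (f (x + k - 1) - f x)

/-- Reflected Galton-Watson generator
`Q̃ f(x) = ∑_{ℓ ≥ -1} x p(ℓ+1) 1{x+ℓ ≥ 1} (f(x+ℓ) - f(x))`. -/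
def gwQRefl (p : ℕ → ℝ) (f : ℕ → ℝ) (x : ℕ) : ℝ :=
  ∑' k : ℕ, (x : ℝ) * p k * (if 1 ≤ x + k - 1 then f (x + k - 1) - f x else 0)

def IsReflSemigroup (p : ℕ → ℝ) (R : MarkovSemigroup ℕ) : Prop :=
  ∀ f : ℕ → ℝ, Bounded f → ∀ x, ∀ t : ℝ, 0 ≤ t →
    HasDerivWithinAt (fun u => ∫ y, f y ∂ R.P u x)
      (∫ y, gwQRefl p f y ∂ R.P t x) (Set.Ici 0) t

/-- `Γ(ρ) = p(0) + ∑_{ℓ ≥ 1} p(ℓ+1) ℓ² e^{ρℓ}`. -/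
def gwGamma (p : ℕ → ℝ) (ρ : ℝ) : ℝ :=
  p 0 + ∑' ℓ : ℕ, p (ℓ + 2) * ((ℓ : ℝ) + 1) ^ 2 * Real.exp (ρ * ((ℓ : ℝ) + 1))

/-- `β = sup {ρ > 0 : ρ Γ(ρ) ≤ v}`. -/
def gwBeta (p : ℕ → ℝ) (v : ℝ) : ℝ :=
  sSup {ρ : ℝ | 0 < ρ ∧ ρ * gwGamma p ρ ≤ v}

/-- Generating function `G(μ; z) = ∑_x μ(x) z^x`. -/
def genFn (μ : ℕ → ℝ) (z : ℝ) : ℝ := ∑' x : ℕ, μ x * z ^ x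

/-- A probability distribution on the positive integers. -/
def IsProbOnPos (μ : ℕ → ℝ) : Prop :=
  (∀ x, 0 ≤ μ x) ∧ μ 0 = 0 ∧ ∑' x : ℕ, μ x = 1

/-- The class `K(α)`: probabilities on ℕ whose second-to-first moment ratio
is at most `α`. -/
def InK (α : ℝ) (μ : ℕ → ℝ) : Prop :=
  IsProbOnPos μ ∧ (Summable fun x : ℕ => (x : ℝ) ^ 2 * μ x) ∧
    (∑' x : ℕ, (x : ℝ) ^ 2 * μ x) ≤ α * ∑' x : ℕ, (x : ℝ) * μ x


private lemma key_frac {w a ψ S : ℝ} (hw : 0 ≤ w) (ha : 0 ≤ a) (hψ : 0 ≤ ψ) (hS : 0 < S) :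
    w * (a - ψ) / (S + w) ≤ (w * a - w * ψ) / S + w ^ 2 * ψ / S ^ 2 := by
  have hSw : 0 < S + w := by linarith
  have hid : (w * a - w * ψ) / S + w ^ 2 * ψ / S ^ 2 - w * (a - ψ) / (S + w)
      = w ^ 2 * (a * S + ψ * w) / (S ^ 2 * (S + w)) := by
    field_simp
    ring
  have h2 : 0 ≤ w ^ 2 * (a * S + ψ * w) / (S ^ 2 * (S + w)) := by positivity
  linarith

private lemma key_down {b ψ S : ℝ} (hb : 0 ≤ b) (hψ : 0 ≤ ψ) (hS : 2 ≤ S) :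
    -((b - ψ) / (S - 1)) ≤ (ψ - b) / S + 2 * ψ / S ^ 2 := by
  have hS0 : 0 < S := by linarith
  have hS1 : 0 < S - 1 := by linarith
  have hid : (ψ - b) / S + 2 * ψ / S ^ 2 + (b - ψ) / (S - 1)
      = b / (S * (S - 1)) + ψ * (S - 2) / (S ^ 2 * (S - 1)) := by
    field_simp
    ring
  have h1 : 0 ≤ b / (S * (S - 1)) := by positivity
  have h2 : 0 ≤ ψ * (S - 2) / (S ^ 2 * (S - 1)) :=
    div_nonneg (mul_nonneg hψ (by linarith)) (by positivity)
  linarith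

private lemma sum_update_g {N : ℕ} (ξ : Fin N → ℕ) (i : Fin N) (y : ℕ) (g : ℕ → ℝ) :
    ∑ j : Fin N, g (Function.update ξ i y j) = g y - g (ξ i) + ∑ j : Fin N, g (ξ j) := by
  classical
  have h1 : ∑ j : Fin N, g (ξ j)
      = g (ξ i) + ∑ j ∈ Finset.univ.erase i, g (ξ j) :=
    (Finset.add_sum_erase _ _ (Finset.mem_univ i)).symm
  have h2 : ∑ j : Fin N, g (Function.update ξ i y j)
      = g (Function.update ξ i y i) + ∑ j ∈ Finset.univ.erase i, g (Function.update ξ i y j) :=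
    (Finset.add_sum_erase _ _ (Finset.mem_univ i)).symm
  rw [h2, Function.update_self]
  rw [Finset.sum_congr rfl fun j hj => by
    rw [Function.update_of_ne (Finset.ne_of_mem_erase hj)]]
  rw [h1]; ring

private lemma emp_nonneg {N : ℕ} (y : ℕ) (ξ : Fin N → ℕ) : 0 ≤ emp N y ξ := by
  unfold emp
  apply mul_nonneg (by positivity)
  apply Finset.sum_nonneg
  intro j _
  split <;> norm_num

private lemma emp_eq_zero {N : ℕ} {y : ℕ} {ξ : Fin N → ℕ} (h : ∀ j, ξ j ≠ y) : emp N y ξ = 0 := by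
  unfold emp
  rw [Finset.sum_eq_zero fun j _ => by simp [h j], mul_zero]

private lemma tsum_emp_mul {N : ℕ} (ξ : Fin N → ℕ) (f : ℕ → ℝ) :
    ∑' y : ℕ, emp N y ξ * f y = (N : ℝ)⁻¹ * ∑ j : Fin N, f (ξ j) := by
  classical
  have h : ∀ y : ℕ, emp N y ξ * f y
      = (N : ℝ)⁻¹ * ∑ j : Fin N, (if ξ j = y then f y else 0) := by
    intro y
    unfold emp
    rw [mul_assoc, Finset.sum_mul]
    congr 1
    apply Finset.sum_congr rfl
    intro j _
    split <;> simp
  rw [tsum_congr h, tsum_mul_left]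
  congr 1
  rw [Summable.tsum_finsetSum (fun j _ => summable_of_ne_finset_zero (s := {ξ j})
    (fun y hy => by rw [if_neg (fun h' => hy (by simp [← h']))]))]
  apply Finset.sum_congr rfl
  intro j _
  rw [tsum_eq_single (ξ j) (fun y hy => by rw [if_neg (fun h' => hy h'.symm)])]
  simp

private lemma nat_sq_le_exp {σ : ℝ} (hσ : 0 < σ) (k : ℕ) :
    (k : ℝ) ^ 2 ≤ 4 / σ ^ 2 * Real.exp (σ * k) := by
  have ht : (0:ℝ) ≤ σ * k := by positivity
  have h1 : σ * k / 2 ≤ Real.exp (σ * k / 2) := by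
    have := Real.add_one_le_exp (σ * k / 2); linarith
  have h2 : (σ * k / 2) ^ 2 ≤ Real.exp (σ * k / 2) ^ 2 := by
    apply pow_le_pow_left₀ (by positivity) h1
  have h3 : Real.exp (σ * k / 2) ^ 2 = Real.exp (σ * k) := by
    rw [sq, ← Real.exp_add]; ring_nf
  calc (k:ℝ) ^ 2 = 4 / σ ^ 2 * (σ * k / 2) ^ 2 := by field_simp; ring
    _ ≤ 4 / σ ^ 2 * Real.exp (σ * k) := by
        rw [← h3]; exact mul_le_mul_of_nonneg_left h2 (by positivity)

set_option maxHeartbeats 1000000 in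
private lemma inner_bound
    (p : ℕ → ℝ) (v B : ℝ) (hnn : ∀ k, 0 ≤ p k)
    (sA : Summable (fun ℓ : ℕ => p (ℓ + 2) * ((ℓ : ℝ) + 1)))
    (sB : Summable (fun ℓ : ℕ => p (ℓ + 2) * ((ℓ : ℝ) + 1) ^ 2))
    (hA : ∑' ℓ : ℕ, p (ℓ + 2) * ((ℓ : ℝ) + 1) = p 0 - v)
    (hBd : ∑' ℓ : ℕ, p (ℓ + 2) * ((ℓ : ℝ) + 1) ^ 2 = B)
    {N : ℕ} (hN : 1 ≤ N) (ξ : Fin N → ℕ) (hξ : ∀ j, 1 ≤ ξ j) (i : Fin N)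
    (S T ψv : ℝ)
    (hS : S = ∑ j : Fin N, (ξ j : ℝ)) (hT : T = ∑ j : Fin N, (ξ j : ℝ) ^ 2)
    (hψv : ψv = T / S) :
    (∑' y : ℕ, (if 1 ≤ y then
        gwRate p (ξ i) y + gwRate p (ξ i) 0 * ((N : ℝ) / ((N : ℝ) - 1)) * emp N y ξ
      else 0) * (psiFun N (Function.update ξ i y) - psiFun N ξ))
    ≤ (ξ i : ℝ) * (2 * (ξ i : ℝ) - ψv) * (-v / S) + (ξ i : ℝ) * ((p 0 + B) / S)
      + (ξ i : ℝ) * ((B + 2 * p 0) * ψv / S ^ 2)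
      + 2 * p 0 * ((ψv - 1) + ψv ^ 2) / ((N : ℝ) * S) := by
  classical
  set x : ℕ := ξ i with hxdef
  have hx1 : 1 ≤ x := hξ i
  have hX1 : (1 : ℝ) ≤ (x : ℝ) := by exact_mod_cast hx1
  have hN0 : (0 : ℝ) < (N : ℝ) := by exact_mod_cast hN
  have hSN : (N : ℝ) ≤ S := by
    rw [hS]
    calc (N : ℝ) = ∑ _j : Fin N, (1 : ℝ) := by simp
      _ ≤ ∑ j : Fin N, (ξ j : ℝ) := by
          apply Finset.sum_le_sum
          intro j _
          exact_mod_cast hξ j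
  have hS1 : (1 : ℝ) ≤ S := le_trans (by exact_mod_cast hN) hSN
  have hS0 : (0 : ℝ) < S := by linarith
  have hTS : S ≤ T := by
    rw [hS, hT]
    apply Finset.sum_le_sum
    intro j _
    have h1 : (1 : ℝ) ≤ (ξ j : ℝ) := by exact_mod_cast hξ j
    nlinarith
  have hψ1 : (1 : ℝ) ≤ ψv := by rw [hψv]; rw [le_div_iff₀ hS0]; linarith
  have hψ0 : (0 : ℝ) ≤ ψv := by linarith
  have hXS : (x : ℝ) ≤ S := by
    rw [hS]
    exact Finset.single_le_sum (f := fun j => ((ξ j : ℕ) : ℝ)) (fun j _ => by positivity)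
      (Finset.mem_univ i)
  have hpsiξ : psiFun N ξ = ψv := by rw [psiFun, hψv, hT, hS]
  have hTψS : T = ψv * S := by rw [hψv]; field_simp
  -- delta formula
  have hdelta : ∀ y : ℕ, 1 ≤ y →
      psiFun N (Function.update ξ i y) - psiFun N ξ
        = ((y : ℝ) - x) * (((x : ℝ) + y) - ψv) / (S + y - x) := by
    intro y hy
    have hy1 : (1 : ℝ) ≤ (y : ℝ) := by exact_mod_cast hy
    have hden : (1 : ℝ) ≤ S + y - x := by linarith
    have hden0 : S + (y : ℝ) - x ≠ 0 := by linarith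
    have h1 : ∑ j : Fin N, ((Function.update ξ i y j : ℕ) : ℝ)
        = (y : ℝ) - x + S := by rw [hS]; exact sum_update_g ξ i y (fun n => (n : ℝ))
    have h2 : ∑ j : Fin N, ((Function.update ξ i y j : ℕ) : ℝ) ^ 2
        = (y : ℝ) ^ 2 - (x : ℝ) ^ 2 + T := by
      rw [hT]; exact sum_update_g ξ i y (fun n => ((n : ℝ)) ^ 2)
    rw [hpsiξ, psiFun, h1, h2, hψv]
    have hd2 : (y : ℝ) - x + S ≠ 0 := by linarith
    field_simp
    ring
  -- abbreviations
  set c : ℝ := (N : ℝ) / ((N : ℝ) - 1) with hcdef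
  have hcfacts : 0 ≤ c ∧ c ≤ 2 ∧ c ≤ 1 + 2 / (N : ℝ) := by
    rcases eq_or_lt_of_le hN with h1 | h2
    · have : (N : ℝ) = 1 := by exact_mod_cast h1.symm
      rw [hcdef, this]
      norm_num
    · have h2' : (2 : ℝ) ≤ (N : ℝ) := by exact_mod_cast h2
      have hd : (0 : ℝ) < (N : ℝ) - 1 := by linarith
      refine ⟨by positivity, ?_, ?_⟩
      · rw [hcdef, div_le_iff₀ hd]; linarith
      · rw [hcdef, div_le_iff₀ hd]
        have : (1 + 2 / (N : ℝ)) * ((N : ℝ) - 1) = (N : ℝ) + 1 - 2 / (N:ℝ) := by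
          field_simp; ring
        rw [this]
        have : 2 / (N : ℝ) ≤ 1 := by rw [div_le_one hN0]; linarith
        linarith
  obtain ⟨hc0, hc2, hc3⟩ := hcfacts
  set dd : ℕ → ℝ := fun y => if y + 1 = x ∧ 1 ≤ y then
      (x : ℝ) * p 0 * (psiFun N (Function.update ξ i y) - psiFun N ξ) else 0 with hdd
  set uu : ℕ → ℝ := fun y => if x < y then
      (x : ℝ) * p (y - x + 1) * (psiFun N (Function.update ξ i y) - psiFun N ξ) else 0 with huu
  set rr : ℕ → ℝ := fun y => (if 1 ≤ y then gwRate p x 0 * c * emp N y ξ else 0) *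
      (psiFun N (Function.update ξ i y) - psiFun N ξ) with hrr
  have hdd_app : ∀ y, dd y = if y + 1 = x ∧ 1 ≤ y then
      (x : ℝ) * p 0 * (psiFun N (Function.update ξ i y) - psiFun N ξ) else 0 := fun y => by
    rw [hdd]
  have huu_app : ∀ y, uu y = if x < y then
      (x : ℝ) * p (y - x + 1) * (psiFun N (Function.update ξ i y) - psiFun N ξ) else 0 := fun y => by
    rw [huu]
  have hrr_app : ∀ y, rr y = (if 1 ≤ y then gwRate p x 0 * c * emp N y ξ else 0) *
      (psiFun N (Function.update ξ i y) - psiFun N ξ) := fun y => by rw [hrr]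
  have hpoint : ∀ y : ℕ,
      (if 1 ≤ y then gwRate p x y + gwRate p x 0 * c * emp N y ξ else 0) *
        (psiFun N (Function.update ξ i y) - psiFun N ξ) = dd y + uu y + rr y := by
    intro y
    rw [hdd_app, huu_app, hrr_app]
    by_cases hy : 1 ≤ y
    · rw [if_pos hy, if_pos hy, add_mul]
      congr 1
      by_cases h1 : y + 1 = x
      · have h2 : ¬ x < y := by omega
        rw [gwRate, if_pos ⟨hx1, h1⟩, if_pos ⟨h1, hy⟩, if_neg h2]
        ring
      · by_cases h2 : x < y
        · rw [gwRate, if_neg (by tauto), if_pos ⟨hx1, h2⟩, if_neg (by tauto), if_pos h2]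
          ring
        · rw [gwRate, if_neg (by tauto), if_neg (by tauto), if_neg (by tauto), if_neg h2]
          ring
    · have h0 : y = 0 := by omega
      have h2 : ¬ x < y := by omega
      rw [if_neg hy, if_neg hy, if_neg h2, if_neg (by omega : ¬ (y + 1 = x ∧ 1 ≤ y))]
      ring
  -- ===== the up-jump piece =====
  have hjinj : Function.Injective (fun ℓ : ℕ => x + 1 + ℓ) := fun a b h => by
    have h' : x + 1 + a = x + 1 + b := h
    omega
  have hjrange : ∀ y, y ∉ Set.range (fun ℓ : ℕ => x + 1 + ℓ) → uu y = 0 := by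
    intro y hy
    have h2 : ¬ x < y := by
      intro hlt
      exact hy ⟨y - (x + 1), by show x + 1 + (y - (x + 1)) = y; omega⟩
    rw [huu_app, if_neg h2]
  have hucomp : ∀ ℓ : ℕ, uu (x + 1 + ℓ)
      = (x : ℝ) * p (ℓ + 2) * (psiFun N (Function.update ξ i (x + 1 + ℓ)) - psiFun N ξ) := by
    intro ℓ
    rw [huu_app, if_pos (by omega : x < x + 1 + ℓ)]
    congr 3
    omega
  have hΔu : ∀ ℓ : ℕ, psiFun N (Function.update ξ i (x + 1 + ℓ)) - psiFun N ξ
      = ((ℓ : ℝ) + 1) * ((2 * (x : ℝ) + ((ℓ : ℝ) + 1)) - ψv) / (S + ((ℓ : ℝ) + 1)) := by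
    intro ℓ
    rw [hdelta (x + 1 + ℓ) (by omega)]
    push_cast
    ring
  have huterm : ∀ ℓ : ℕ, uu (x + 1 + ℓ)
      ≤ ((x : ℝ) * (2 * (x : ℝ) - ψv) / S) * (p (ℓ + 2) * ((ℓ : ℝ) + 1))
        + ((x : ℝ) / S + (x : ℝ) * ψv / S ^ 2) * (p (ℓ + 2) * ((ℓ : ℝ) + 1) ^ 2) := by
    intro ℓ
    rw [hucomp ℓ, hΔu ℓ]
    have hkey := key_frac (w := (ℓ : ℝ) + 1) (a := 2 * (x : ℝ) + ((ℓ : ℝ) + 1)) (ψ := ψv)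
      (S := S) (by positivity) (by positivity) hψ0 hS0
    have hmul := mul_le_mul_of_nonneg_left hkey
      (show 0 ≤ (x : ℝ) * p (ℓ + 2) by exact mul_nonneg (by positivity) (hnn _))
    calc (x : ℝ) * p (ℓ + 2) * (((ℓ : ℝ) + 1) * ((2 * (x : ℝ) + ((ℓ : ℝ) + 1)) - ψv) / (S + ((ℓ : ℝ) + 1)))
        ≤ (x : ℝ) * p (ℓ + 2) * ((((ℓ : ℝ) + 1) * (2 * (x : ℝ) + ((ℓ : ℝ) + 1)) - ((ℓ : ℝ) + 1) * ψv) / S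
            + ((ℓ : ℝ) + 1) ^ 2 * ψv / S ^ 2) := hmul
      _ = ((x : ℝ) * (2 * (x : ℝ) - ψv) / S) * (p (ℓ + 2) * ((ℓ : ℝ) + 1))
            + ((x : ℝ) / S + (x : ℝ) * ψv / S ^ 2) * (p (ℓ + 2) * ((ℓ : ℝ) + 1) ^ 2) := by ring
  have hsRHS : Summable (fun ℓ : ℕ => ((x : ℝ) * (2 * (x : ℝ) - ψv) / S) * (p (ℓ + 2) * ((ℓ : ℝ) + 1))
      + ((x : ℝ) / S + (x : ℝ) * ψv / S ^ 2) * (p (ℓ + 2) * ((ℓ : ℝ) + 1) ^ 2)) :=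
    (sA.mul_left _).add (sB.mul_left _)
  have habs : ∀ ℓ : ℕ, |uu (x + 1 + ℓ)|
      ≤ (x : ℝ) * (p (ℓ + 2) * ((ℓ : ℝ) + 1) ^ 2)
        + ((x : ℝ) * (2 * (x : ℝ) + ψv)) * (p (ℓ + 2) * ((ℓ : ℝ) + 1)) := by
    intro ℓ
    rw [hucomp ℓ, hΔu ℓ]
    have hw : (0 : ℝ) < (ℓ : ℝ) + 1 := by positivity
    have hSw : (1 : ℝ) ≤ S + ((ℓ : ℝ) + 1) := by linarith
    have ha : (0 : ℝ) ≤ 2 * (x : ℝ) + ((ℓ : ℝ) + 1) := by positivity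
    rw [abs_mul, abs_mul]
    rw [abs_of_nonneg (show (0:ℝ) ≤ (x:ℝ) by positivity), abs_of_nonneg (hnn (ℓ + 2))]
    have h1 : |((ℓ : ℝ) + 1) * ((2 * (x : ℝ) + ((ℓ : ℝ) + 1)) - ψv) / (S + ((ℓ : ℝ) + 1))|
        ≤ ((ℓ : ℝ) + 1) * ((2 * (x : ℝ) + ((ℓ : ℝ) + 1)) + ψv) := by
      rw [abs_div, abs_of_nonneg (by linarith : (0:ℝ) ≤ S + ((ℓ : ℝ) + 1)), abs_mul,
        abs_of_nonneg hw.le]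
      have h2 : |(2 * (x : ℝ) + ((ℓ : ℝ) + 1)) - ψv| ≤ (2 * (x : ℝ) + ((ℓ : ℝ) + 1)) + ψv :=
        abs_le.mpr ⟨by linarith, by linarith⟩
      calc ((ℓ : ℝ) + 1) * |(2 * (x : ℝ) + ((ℓ : ℝ) + 1)) - ψv| / (S + ((ℓ : ℝ) + 1))
          ≤ ((ℓ : ℝ) + 1) * ((2 * (x : ℝ) + ((ℓ : ℝ) + 1)) + ψv) / (S + ((ℓ : ℝ) + 1)) := by
            apply div_le_div_of_nonneg_right ?_ (by linarith)
            exact mul_le_mul_of_nonneg_left h2 hw.le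
        _ ≤ ((ℓ : ℝ) + 1) * ((2 * (x : ℝ) + ((ℓ : ℝ) + 1)) + ψv) :=
            div_le_self (by positivity) hSw
    calc (x : ℝ) * p (ℓ + 2) * |((ℓ : ℝ) + 1) * ((2 * (x : ℝ) + ((ℓ : ℝ) + 1)) - ψv) / (S + ((ℓ : ℝ) + 1))|
        ≤ (x : ℝ) * p (ℓ + 2) * (((ℓ : ℝ) + 1) * ((2 * (x : ℝ) + ((ℓ : ℝ) + 1)) + ψv)) := by
          exact mul_le_mul_of_nonneg_left h1 (mul_nonneg (by positivity) (hnn _))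
      _ = (x : ℝ) * (p (ℓ + 2) * ((ℓ : ℝ) + 1) ^ 2)
            + ((x : ℝ) * (2 * (x : ℝ) + ψv)) * (p (ℓ + 2) * ((ℓ : ℝ) + 1)) := by ring
  have hsL : Summable (fun ℓ : ℕ => uu (x + 1 + ℓ)) := by
    apply Summable.of_abs
    apply Summable.of_nonneg_of_le (fun ℓ => abs_nonneg _) habs
    exact (sB.mul_left _).add (sA.mul_left _)
  have hsU : Summable uu := (hjinj.summable_iff hjrange).mp hsL
  have htu : ∑' y, uu y = ∑' ℓ : ℕ, uu (x + 1 + ℓ) := by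
    refine (hjinj.tsum_eq ?_).symm
    intro y hy
    by_contra hmem
    exact hy (hjrange y hmem)
  have hu_bound : ∑' y, uu y
      ≤ ((x : ℝ) * (2 * (x : ℝ) - ψv) / S) * (p 0 - v)
        + ((x : ℝ) / S + (x : ℝ) * ψv / S ^ 2) * B := by
    rw [htu]
    calc ∑' ℓ : ℕ, uu (x + 1 + ℓ)
        ≤ ∑' ℓ : ℕ, (((x : ℝ) * (2 * (x : ℝ) - ψv) / S) * (p (ℓ + 2) * ((ℓ : ℝ) + 1))
            + ((x : ℝ) / S + (x : ℝ) * ψv / S ^ 2) * (p (ℓ + 2) * ((ℓ : ℝ) + 1) ^ 2)) :=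
          Summable.tsum_le_tsum huterm hsL hsRHS
      _ = ((x : ℝ) * (2 * (x : ℝ) - ψv) / S) * (p 0 - v)
            + ((x : ℝ) / S + (x : ℝ) * ψv / S ^ 2) * B := by
          rw [Summable.tsum_add (sA.mul_left _) (sB.mul_left _), tsum_mul_left, tsum_mul_left, hA, hBd]
  -- ===== summability of dd and rr =====
  have hsdd : Summable dd := by
    apply summable_of_ne_finset_zero (s := {x - 1})
    intro y hy
    rw [hdd_app, if_neg]
    rintro ⟨h1, h2⟩
    apply hy
    simp only [Finset.mem_singleton]
    omega
  have hsrr : Summable rr := by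
    apply summable_of_ne_finset_zero (s := Finset.image ξ Finset.univ)
    intro y hy
    have hne : ∀ j, ξ j ≠ y := by
      intro j hj
      apply hy
      rw [← hj]
      exact Finset.mem_image_of_mem ξ (Finset.mem_univ j)
    rw [hrr_app]
    by_cases h1 : 1 ≤ y
    · rw [if_pos h1, emp_eq_zero hne, mul_zero, zero_mul]
    · rw [if_neg h1, zero_mul]
  -- ===== the down/resampling piece =====
  have hdr : (∑' y, dd y) + (∑' y, rr y)
      ≤ (x : ℝ) * (p 0 * (1 - 2 * (x : ℝ) + ψv)) / S + 2 * (x : ℝ) * p 0 * ψv / S ^ 2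
        + 2 * p 0 * ((ψv - 1) + ψv ^ 2) / ((N : ℝ) * S) := by
    have hp0 : 0 ≤ p 0 := hnn 0
    rcases eq_or_lt_of_le hx1 with hx1e | hx2
    · -- x = 1 : no down-jump; resampling term
      have hxe : x = 1 := hx1e.symm
      have hdd0 : ∀ y, dd y = 0 := by
        intro y
        rw [hdd_app, if_neg]
        rintro ⟨h1, h2⟩
        omega
      have htd : (∑' y, dd y) = 0 := by rw [tsum_congr hdd0, tsum_zero]
      have hg : gwRate p x 0 = p 0 := by
        rw [hxe, gwRate, if_pos (by omega : 1 ≤ 1 ∧ 0 + 1 = 1)]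
        norm_num
      set bnd : ℕ → ℝ := fun y => (ψv - 1) / S + (-ψv / S) * (y : ℝ)
          + (1 / S + ψv / S ^ 2) * (y : ℝ) ^ 2 with hbnd
      have hbnd_app : ∀ y : ℕ, bnd y = (ψv - 1) / S + (-ψv / S) * (y : ℝ)
          + (1 / S + ψv / S ^ 2) * (y : ℝ) ^ 2 := fun y => by rw [hbnd]
      have hterm : ∀ y : ℕ, rr y ≤ p 0 * c * (emp N y ξ * bnd y) := by
        intro y
        by_cases hy : 1 ≤ y
        · rw [hrr_app, if_pos hy, hg]
          have hy1 : (1 : ℝ) ≤ (y : ℝ) := by exact_mod_cast hy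
          have hΔ : psiFun N (Function.update ξ i y) - psiFun N ξ ≤ bnd y := by
            rw [hdelta y hy, hxe]
            have hrw : ((y : ℝ) - (1 : ℕ)) * (((1 : ℕ) : ℝ) + y - ψv) / (S + y - (1 : ℕ))
                = ((y : ℝ) - 1) * ((((y : ℝ) + 1)) - ψv) / (S + ((y : ℝ) - 1)) := by
              push_cast
              ring_nf
            rw [hrw]
            have hkey := key_frac (w := (y : ℝ) - 1) (a := (y : ℝ) + 1) (ψ := ψv) (S := S)
              (by linarith) (by positivity) hψ0 hS0
            have heq : (((y : ℝ) - 1) * ((y : ℝ) + 1) - ((y : ℝ) - 1) * ψv) / S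
                + ((y : ℝ) - 1) ^ 2 * ψv / S ^ 2 + ψv * (2 * (y : ℝ) - 1) / S ^ 2 = bnd y := by
              rw [hbnd_app]
              field_simp
              ring
            have hpos : 0 ≤ ψv * (2 * (y : ℝ) - 1) / S ^ 2 := by
              apply div_nonneg (mul_nonneg hψ0 (by linarith)) (by positivity)
            linarith
          rw [mul_assoc]
          exact mul_le_mul_of_nonneg_left
            (mul_le_mul_of_nonneg_left hΔ (emp_nonneg y ξ)) (by positivity)
        · have h0 : y = 0 := by omega
          rw [hrr_app, if_neg hy, zero_mul, h0,
            emp_eq_zero (fun j => by have := hξ j; omega), zero_mul, mul_zero]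
      have hsrr' : Summable (fun y => p 0 * c * (emp N y ξ * bnd y)) := by
        apply summable_of_ne_finset_zero (s := Finset.image ξ Finset.univ)
        intro y hy
        have hne : ∀ j, ξ j ≠ y := by
          intro j hj
          apply hy
          rw [← hj]
          exact Finset.mem_image_of_mem ξ (Finset.mem_univ j)
        rw [emp_eq_zero hne, zero_mul, mul_zero]
      have hbndsum : (N : ℝ)⁻¹ * ∑ j : Fin N, bnd (ξ j)
          = (ψv - 1) / S + ψv ^ 2 / ((N : ℝ) * S) := by
        have h1 : ∑ j : Fin N, bnd (ξ j)
            = (N : ℝ) * ((ψv - 1) / S) + (-ψv / S) * S + (1 / S + ψv / S ^ 2) * T := by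
          simp only [hbnd_app]
          rw [Finset.sum_add_distrib, Finset.sum_add_distrib, Finset.sum_const,
            ← Finset.mul_sum, ← Finset.mul_sum, ← hS, ← hT]
          simp [nsmul_eq_mul, Finset.card_univ]
        rw [h1, hTψS]
        field_simp
        ring
      have htr : (∑' y, rr y) ≤ p 0 * c * ((ψv - 1) / S + ψv ^ 2 / ((N : ℝ) * S)) := by
        calc (∑' y, rr y) ≤ ∑' y, p 0 * c * (emp N y ξ * bnd y) :=
              Summable.tsum_le_tsum hterm hsrr hsrr'
          _ = p 0 * c * ((N : ℝ)⁻¹ * ∑ j : Fin N, bnd (ξ j)) := by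
              rw [tsum_mul_left, tsum_emp_mul]
          _ = p 0 * c * ((ψv - 1) / S + ψv ^ 2 / ((N : ℝ) * S)) := by rw [hbndsum]
      -- conclude in the x = 1 case
      have hu1 : 0 ≤ (ψv - 1) / S := div_nonneg (by linarith) hS0.le
      have hu2 : 0 ≤ ψv ^ 2 / ((N : ℝ) * S) := by positivity
      have hstep1 : p 0 * (c * ((ψv - 1) / S))
          ≤ p 0 * ((ψv - 1) / S + 2 * ((ψv - 1) / ((N : ℝ) * S))) := by
        apply mul_le_mul_of_nonneg_left ?_ hp0
        have h2 : (1 + 2 / (N : ℝ)) * ((ψv - 1) / S)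
            = (ψv - 1) / S + 2 * ((ψv - 1) / ((N : ℝ) * S)) := by
          field_simp
        calc c * ((ψv - 1) / S) ≤ (1 + 2 / (N : ℝ)) * ((ψv - 1) / S) :=
              mul_le_mul_of_nonneg_right hc3 hu1
          _ = (ψv - 1) / S + 2 * ((ψv - 1) / ((N : ℝ) * S)) := h2
      have hstep2 : p 0 * (c * (ψv ^ 2 / ((N : ℝ) * S)))
          ≤ p 0 * (2 * (ψv ^ 2 / ((N : ℝ) * S))) := by
        apply mul_le_mul_of_nonneg_left ?_ hp0
        exact mul_le_mul_of_nonneg_right hc2 hu2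
      have hpos2 : 0 ≤ 2 * (x : ℝ) * p 0 * ψv / S ^ 2 := by positivity
      have hfin : p 0 * c * ((ψv - 1) / S + ψv ^ 2 / ((N : ℝ) * S))
          ≤ (x : ℝ) * (p 0 * (1 - 2 * (x : ℝ) + ψv)) / S + 2 * (x : ℝ) * p 0 * ψv / S ^ 2
            + 2 * p 0 * ((ψv - 1) + ψv ^ 2) / ((N : ℝ) * S) := by
        rw [hxe]
        have hL : p 0 * c * ((ψv - 1) / S + ψv ^ 2 / ((N : ℝ) * S))
            = p 0 * (c * ((ψv - 1) / S)) + p 0 * (c * (ψv ^ 2 / ((N : ℝ) * S))) := by ring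
        have hR : ((1 : ℕ) : ℝ) * (p 0 * (1 - 2 * ((1 : ℕ) : ℝ) + ψv)) / S
              + 2 * ((1 : ℕ) : ℝ) * p 0 * ψv / S ^ 2
              + 2 * p 0 * ((ψv - 1) + ψv ^ 2) / ((N : ℝ) * S)
            = p 0 * ((ψv - 1) / S + 2 * ((ψv - 1) / ((N : ℝ) * S)))
              + p 0 * (2 * (ψv ^ 2 / ((N : ℝ) * S))) + 2 * ((1 : ℕ) : ℝ) * p 0 * ψv / S ^ 2 := by
          push_cast
          field_simp
          ring
        rw [hL, hR]
        have hpos2' : 0 ≤ 2 * ((1 : ℕ) : ℝ) * p 0 * ψv / S ^ 2 := by positivity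
        linarith
      rw [htd, zero_add]
      exact le_trans htr hfin
    · -- 2 ≤ x : down-jump, no resampling
      have hx2' : 2 ≤ x := hx2
      have hg0 : gwRate p x 0 = 0 := by
        rw [gwRate, if_neg (by omega), if_neg (by omega)]
      have hrr0 : ∀ y, rr y = 0 := by
        intro y
        rw [hrr_app, hg0]
        by_cases hy : 1 ≤ y
        · rw [if_pos hy, zero_mul, zero_mul, zero_mul]
        · rw [if_neg hy, zero_mul]
      have htr : (∑' y, rr y) = 0 := by rw [tsum_congr hrr0, tsum_zero]
      have htd : (∑' y, dd y) = dd (x - 1) := by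
        apply tsum_eq_single
        intro y hy
        rw [hdd_app, if_neg]
        rintro ⟨h1, h2⟩
        omega
      have hX2 : (2 : ℝ) ≤ (x : ℝ) := by exact_mod_cast hx2'
      have hS2 : (2 : ℝ) ≤ S := le_trans hX2 hXS
      have hΔd : psiFun N (Function.update ξ i (x - 1)) - psiFun N ξ
          = -(((2 * (x : ℝ) - 1) - ψv) / (S - 1)) := by
        rw [hdelta (x - 1) (by omega), Nat.cast_sub hx1]
        push_cast
        ring
      have hkey := key_down (b := 2 * (x : ℝ) - 1) (ψ := ψv) (S := S)
        (by linarith) hψ0 hS2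
      have hdd_val : dd (x - 1) = (x : ℝ) * p 0 *
          (psiFun N (Function.update ξ i (x - 1)) - psiFun N ξ) := by
        rw [hdd_app, if_pos ⟨by omega, by omega⟩]
      have hmul := mul_le_mul_of_nonneg_left hkey
        (show 0 ≤ (x : ℝ) * p 0 by positivity)
      have hEpos : 0 ≤ 2 * p 0 * ((ψv - 1) + ψv ^ 2) / ((N : ℝ) * S) := by
        apply div_nonneg ?_ (by positivity)
        apply mul_nonneg (by positivity)
        nlinarith
      rw [htr, add_zero, htd, hdd_val, hΔd]
      calc (x : ℝ) * p 0 * (-(((2 * (x : ℝ) - 1) - ψv) / (S - 1)))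
          ≤ (x : ℝ) * p 0 * ((ψv - (2 * (x : ℝ) - 1)) / S + 2 * ψv / S ^ 2) := hmul
        _ = (x : ℝ) * (p 0 * (1 - 2 * (x : ℝ) + ψv)) / S + 2 * (x : ℝ) * p 0 * ψv / S ^ 2 := by
            ring
        _ ≤ (x : ℝ) * (p 0 * (1 - 2 * (x : ℝ) + ψv)) / S + 2 * (x : ℝ) * p 0 * ψv / S ^ 2
            + 2 * p 0 * ((ψv - 1) + ψv ^ 2) / ((N : ℝ) * S) := by linarith
  -- ===== assembly =====
  calc (∑' y : ℕ, (if 1 ≤ y then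
        gwRate p x y + gwRate p x 0 * c * emp N y ξ else 0) *
        (psiFun N (Function.update ξ i y) - psiFun N ξ))
      = ∑' y : ℕ, (dd y + uu y + rr y) := tsum_congr hpoint
    _ = (∑' y, dd y) + (∑' y, uu y) + (∑' y, rr y) := by
        rw [Summable.tsum_add (hsdd.add hsU) hsrr, Summable.tsum_add hsdd hsU]
    _ ≤ (((x : ℝ) * (2 * (x : ℝ) - ψv) / S) * (p 0 - v)
          + ((x : ℝ) / S + (x : ℝ) * ψv / S ^ 2) * B)
        + ((x : ℝ) * (p 0 * (1 - 2 * (x : ℝ) + ψv)) / S + 2 * (x : ℝ) * p 0 * ψv / S ^ 2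
          + 2 * p 0 * ((ψv - 1) + ψv ^ 2) / ((N : ℝ) * S)) := by linarith
    _ = (x : ℝ) * (2 * (x : ℝ) - ψv) * (-v / S) + (x : ℝ) * ((p 0 + B) / S)
          + (x : ℝ) * ((B + 2 * p 0) * ψv / S ^ 2)
          + 2 * p 0 * ((ψv - 1) + ψv ^ 2) / ((N : ℝ) * S) := by ring

set_option maxHeartbeats 1000000 in
/-- **The second-to-first moment ratio is a Lyapunov functional.**
There are positive constants `C₁, C₂`, independent of `N`, such that the
Fleming-Viot generator satisfies
`L^N ψ(ξ) ≤ -v ψ(ξ) + C₁ R²(ξ)/N + C₂`, where `v` is the subcritical drift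
of the driving Galton-Watson process. -/
theorem fv_generator_lyapunov_psi
    (p : ℕ → ℝ) (σ v : ℝ) (hp : OffspringLaw p σ v) :
    ∃ C₁ C₂ : ℝ, 0 < C₁ ∧ 0 < C₂ ∧
      ∀ N : ℕ, 1 ≤ N → ∀ ξ : Fin N → ℕ, (∀ i, 1 ≤ ξ i) →
        fvGen p N (psiFun N) ξ ≤
          -v * psiFun N ξ + C₁ * (rmax N ξ : ℝ) ^ 2 / (N : ℝ) + C₂ := by
  classical
  have hσ := hp.sigma_pos
  have hp0 : 0 ≤ p 0 := hp.nonneg 0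
  -- summability facts
  have hsum0 : Summable p := by
    apply Summable.of_nonneg_of_le hp.nonneg (fun k => ?_) hp.expMoment
    nth_rewrite 1 [← mul_one (p k)]
    apply mul_le_mul_of_nonneg_left ?_ (hp.nonneg k)
    have := Real.add_one_le_exp (σ * k)
    have h0 : (0:ℝ) ≤ σ * k := by positivity
    linarith
  have hsum2 : Summable (fun k : ℕ => p k * (k : ℝ) ^ 2) := by
    apply Summable.of_nonneg_of_le (fun k => mul_nonneg (hp.nonneg k) (by positivity))
      (fun k => ?_) (hp.expMoment.mul_left (4 / σ ^ 2))
    calc p k * (k : ℝ) ^ 2 ≤ p k * (4 / σ ^ 2 * Real.exp (σ * k)) :=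
          mul_le_mul_of_nonneg_left (nat_sq_le_exp hσ k) (hp.nonneg k)
      _ = 4 / σ ^ 2 * (p k * Real.exp (σ * k)) := by ring
  have hsum1 : Summable (fun k : ℕ => p k * (k : ℝ)) := by
    apply Summable.of_nonneg_of_le (fun k => mul_nonneg (hp.nonneg k) (by positivity))
      (fun k => ?_) (hsum0.add hsum2)
    have h1 : (k : ℝ) ≤ 1 + (k : ℝ) ^ 2 := by nlinarith [sq_nonneg ((k : ℝ) - 1)]
    calc p k * (k : ℝ) ≤ p k * (1 + (k : ℝ) ^ 2) :=
          mul_le_mul_of_nonneg_left h1 (hp.nonneg k)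
      _ = p k + p k * (k : ℝ) ^ 2 := by ring
  have sA : Summable (fun ℓ : ℕ => p (ℓ + 2) * ((ℓ : ℝ) + 1)) := by
    apply Summable.of_nonneg_of_le (fun ℓ => mul_nonneg (hp.nonneg _) (by positivity))
      (fun ℓ => ?_) ((summable_nat_add_iff 2).mpr hsum1)
    apply mul_le_mul_of_nonneg_left ?_ (hp.nonneg _)
    push_cast
    linarith
  have sB : Summable (fun ℓ : ℕ => p (ℓ + 2) * ((ℓ : ℝ) + 1) ^ 2) := by
    apply Summable.of_nonneg_of_le (fun ℓ => mul_nonneg (hp.nonneg _) (by positivity))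
      (fun ℓ => ?_) ((summable_nat_add_iff 2).mpr hsum2)
    apply mul_le_mul_of_nonneg_left ?_ (hp.nonneg _)
    push_cast
    nlinarith [Nat.cast_nonneg (α := ℝ) ℓ]
  -- drift identity
  have hsum1' : Summable (fun k : ℕ => ((k : ℝ) - 1) * p k) := by
    have he : (fun k : ℕ => ((k : ℝ) - 1) * p k) = fun k => p k * (k : ℝ) - p k := by
      funext k; ring
    rw [he]
    exact hsum1.sub hsum0
  have hA : ∑' ℓ : ℕ, p (ℓ + 2) * ((ℓ : ℝ) + 1) = p 0 - v := by
    have h0 := Summable.tsum_eq_zero_add hsum1'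
    have h1 := Summable.tsum_eq_zero_add ((summable_nat_add_iff 1).mpr hsum1')
    rw [h1, hp.drift] at h0
    have h2 : ∑' k : ℕ, (((k + 1 + 1 : ℕ) : ℝ) - 1) * p (k + 1 + 1)
        = ∑' ℓ : ℕ, p (ℓ + 2) * ((ℓ : ℝ) + 1) := by
      apply tsum_congr
      intro k
      have he : k + 1 + 1 = k + 2 := by omega
      rw [he]
      push_cast
      ring
    rw [h2] at h0
    push_cast at h0
    linarith
  set B : ℝ := ∑' ℓ : ℕ, p (ℓ + 2) * ((ℓ : ℝ) + 1) ^ 2 with hBdef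
  have hBd : ∑' ℓ : ℕ, p (ℓ + 2) * ((ℓ : ℝ) + 1) ^ 2 = B := rfl
  have hB0 : 0 ≤ B := by
    rw [hBdef]
    exact tsum_nonneg fun ℓ => mul_nonneg (hp.nonneg _) (by positivity)
  refine ⟨B + 6 * p 0 + 1, B + p 0 + 1, by linarith, by linarith, ?_⟩
  intro N hN ξ hξ
  have hN0 : (0 : ℝ) < (N : ℝ) := by exact_mod_cast hN
  set S : ℝ := ∑ j : Fin N, (ξ j : ℝ) with hSdef
  set T : ℝ := ∑ j : Fin N, (ξ j : ℝ) ^ 2 with hTdef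
  set Ψ : ℝ := psiFun N ξ with hΨdef
  have hψv : Ψ = T / S := by rw [hΨdef, psiFun]
  have hSN : (N : ℝ) ≤ S := by
    rw [hSdef]
    calc (N : ℝ) = ∑ _j : Fin N, (1 : ℝ) := by simp
      _ ≤ ∑ j : Fin N, (ξ j : ℝ) := by
          apply Finset.sum_le_sum
          intro j _
          exact_mod_cast hξ j
  have hS1 : (1 : ℝ) ≤ S := le_trans (by exact_mod_cast hN) hSN
  have hS0 : (0 : ℝ) < S := by linarith
  have hTS : S ≤ T := by
    rw [hSdef, hTdef]
    apply Finset.sum_le_sum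
    intro j _
    have h1 : (1 : ℝ) ≤ (ξ j : ℝ) := by exact_mod_cast hξ j
    nlinarith
  have hψ1 : (1 : ℝ) ≤ Ψ := by rw [hψv, le_div_iff₀ hS0]; linarith
  have hψ0 : (0 : ℝ) ≤ Ψ := by linarith
  have hTψS : T = Ψ * S := by rw [hψv]; field_simp
  have hξR : ∀ i, ξ i ≤ rmax N ξ := fun i => Finset.le_sup (Finset.mem_univ i)
  have hR1 : (1 : ℝ) ≤ (rmax N ξ : ℝ) := by
    have := le_trans (hξ ⟨0, hN⟩) (hξR ⟨0, hN⟩)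
    exact_mod_cast this
  have hTR : T ≤ (rmax N ξ : ℝ) * S := by
    rw [hTdef, hSdef, Finset.mul_sum]
    apply Finset.sum_le_sum
    intro j _
    have h1 : (ξ j : ℝ) ≤ (rmax N ξ : ℝ) := by exact_mod_cast hξR j
    have h2 : (0 : ℝ) ≤ (ξ j : ℝ) := by positivity
    nlinarith
  have hψR : Ψ ≤ (rmax N ξ : ℝ) := by
    rw [hψv, div_le_iff₀ hS0]
    linarith
  -- per-particle bound
  have key := fun i : Fin N => inner_bound p v B hp.nonneg sA sB hA hBd hN ξ hξ i
    S T Ψ hSdef hTdef hψv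
  have hgen : fvGen p N (psiFun N) ξ = ∑ i : Fin N, ∑' y : ℕ,
      (if 1 ≤ y then
        gwRate p (ξ i) y + gwRate p (ξ i) 0 * ((N : ℝ) / ((N : ℝ) - 1)) * emp N y ξ
      else 0) * (psiFun N (Function.update ξ i y) - psiFun N ξ) := rfl
  have hsum_bound : fvGen p N (psiFun N) ξ ≤
      ∑ i : Fin N, ((ξ i : ℝ) * (2 * (ξ i : ℝ) - Ψ) * (-v / S) + (ξ i : ℝ) * ((p 0 + B) / S)
        + (ξ i : ℝ) * ((B + 2 * p 0) * Ψ / S ^ 2)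
        + 2 * p 0 * ((Ψ - 1) + Ψ ^ 2) / ((N : ℝ) * S)) := by
    rw [hgen]
    exact Finset.sum_le_sum fun i _ => key i
  have hsum_eval : ∑ i : Fin N, ((ξ i : ℝ) * (2 * (ξ i : ℝ) - Ψ) * (-v / S)
        + (ξ i : ℝ) * ((p 0 + B) / S)
        + (ξ i : ℝ) * ((B + 2 * p 0) * Ψ / S ^ 2)
        + 2 * p 0 * ((Ψ - 1) + Ψ ^ 2) / ((N : ℝ) * S))
      = (2 * T - Ψ * S) * (-v / S) + S * ((p 0 + B) / S) + S * ((B + 2 * p 0) * Ψ / S ^ 2)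
        + (N : ℝ) * (2 * p 0 * ((Ψ - 1) + Ψ ^ 2) / ((N : ℝ) * S)) := by
    rw [Finset.sum_add_distrib, Finset.sum_add_distrib, Finset.sum_add_distrib]
    congr 1
    congr 1
    congr 1
    · rw [← Finset.sum_mul]
      congr 1
      have he : ∀ i : Fin N, (ξ i : ℝ) * (2 * (ξ i : ℝ) - Ψ) = 2 * (ξ i : ℝ) ^ 2 - Ψ * (ξ i : ℝ) := by
        intro i; ring
      rw [Finset.sum_congr rfl fun i _ => he i, Finset.sum_sub_distrib,
        ← Finset.mul_sum, ← Finset.mul_sum, ← hSdef, ← hTdef]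
    · rw [← Finset.sum_mul, ← hSdef]
    · rw [← Finset.sum_mul, ← hSdef]
    · rw [Finset.sum_const, Finset.card_univ, Fintype.card_fin, nsmul_eq_mul]
  -- final arithmetic
  set R : ℝ := (rmax N ξ : ℝ) with hRdef
  have hQ : Ψ ^ 2 / S ≤ R ^ 2 / (N : ℝ) := by
    apply div_le_div₀ (by positivity) ?_ hN0 hSN
    nlinarith
  have hΨΨ : Ψ ≤ Ψ ^ 2 := by nlinarith
  have hΨΨ' : Ψ - 1 ≤ Ψ ^ 2 := by nlinarith
  have hQ1 : Ψ / S ≤ Ψ ^ 2 / S := by gcongr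
  have hQ2 : (Ψ - 1) / S ≤ Ψ ^ 2 / S := by gcongr
  have hQ0 : 0 ≤ R ^ 2 / (N : ℝ) := by positivity
  have hfinal : (2 * T - Ψ * S) * (-v / S) + S * ((p 0 + B) / S) + S * ((B + 2 * p 0) * Ψ / S ^ 2)
        + (N : ℝ) * (2 * p 0 * ((Ψ - 1) + Ψ ^ 2) / ((N : ℝ) * S))
      ≤ -v * Ψ + (B + 6 * p 0 + 1) * R ^ 2 / (N : ℝ) + (B + p 0 + 1) := by
    have heq : (2 * T - Ψ * S) * (-v / S) + S * ((p 0 + B) / S) + S * ((B + 2 * p 0) * Ψ / S ^ 2)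
          + (N : ℝ) * (2 * p 0 * ((Ψ - 1) + Ψ ^ 2) / ((N : ℝ) * S))
        = -v * Ψ + (p 0 + B) + (B + 2 * p 0) * (Ψ / S)
          + 2 * p 0 * ((Ψ - 1) / S) + 2 * p 0 * (Ψ ^ 2 / S) := by
      rw [hTψS]
      field_simp
      ring
    rw [heq]
    have m1 : (B + 2 * p 0) * (Ψ / S) ≤ (B + 2 * p 0) * (R ^ 2 / (N : ℝ)) :=
      mul_le_mul_of_nonneg_left (hQ1.trans hQ) (by linarith)
    have m2 : 2 * p 0 * ((Ψ - 1) / S) ≤ 2 * p 0 * (R ^ 2 / (N : ℝ)) :=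
      mul_le_mul_of_nonneg_left (hQ2.trans hQ) (by linarith)
    have m3 : 2 * p 0 * (Ψ ^ 2 / S) ≤ 2 * p 0 * (R ^ 2 / (N : ℝ)) :=
      mul_le_mul_of_nonneg_left hQ (by linarith)
    have hgoal : (B + 6 * p 0 + 1) * R ^ 2 / (N : ℝ)
        = (B + 2 * p 0) * (R ^ 2 / (N : ℝ)) + 2 * p 0 * (R ^ 2 / (N : ℝ))
          + 2 * p 0 * (R ^ 2 / (N : ℝ)) + R ^ 2 / (N : ℝ) := by
      field_simp
      ring
    rw [hgoal]
    linarith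
  calc fvGen p N (psiFun N) ξ
      ≤ ∑ i : Fin N, ((ξ i : ℝ) * (2 * (ξ i : ℝ) - Ψ) * (-v / S) + (ξ i : ℝ) * ((p 0 + B) / S)
        + (ξ i : ℝ) * ((B + 2 * p 0) * Ψ / S ^ 2)
        + 2 * p 0 * ((Ψ - 1) + Ψ ^ 2) / ((N : ℝ) * S)) := hsum_bound
    _ = (2 * T - Ψ * S) * (-v / S) + S * ((p 0 + B) / S) + S * ((B + 2 * p 0) * Ψ / S ^ 2)
        + (N : ℝ) * (2 * p 0 * ((Ψ - 1) + Ψ ^ 2) / ((N : ℝ) * S)) := hsum_eval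
    _ ≤ -v * Ψ + (B + 6 * p 0 + 1) * R ^ 2 / (N : ℝ) + (B + p 0 + 1) := hfinal


end
end

section
/- Let {μ_n^γ : n ∈ ℕ, γ ∈ Γ} be a family of probability measures on ℕ and ν a probability measure on ℕ. If for each z ∈ [0,1] one has lim_{n→∞} sup_{γ∈Γ} |G(μ_n^γ; z) − G(ν; z)| = 0, then for each x ∈ ℕ, lim_{n→∞} sup_{γ∈Γ} |μ_n^γ(x) − ν(x)| = 0. -/
open MeasureTheory Filter Topology Set

noncomputable section

private lemma prob_summable {μ : ℕ → ℝ} (hμ : IsProbOnPos μ) : Summable μ := by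
  by_contra hns
  have := hμ.2.2
  rw [tsum_eq_zero_of_not_summable hns] at this
  norm_num at this

private lemma genFn_tail {μ : ℕ → ℝ} (hμ : IsProbOnPos μ) {z : ℝ} (hz0 : 0 ≤ z)
    (hz1 : z ≤ 1) (x : ℕ) :
    |genFn μ z - ∑ y ∈ Finset.range (x + 1), μ y * z ^ y| ≤ z ^ (x + 1) := by
  obtain ⟨hnn, h0, hsum⟩ := hμ
  have hs : Summable μ := prob_summable ⟨hnn, h0, hsum⟩
  have hsz : Summable (fun y => μ y * z ^ y) := by
    refine Summable.of_nonneg_of_le (fun y => mul_nonneg (hnn y) (pow_nonneg hz0 y))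
      (fun y => ?_) hs
    calc μ y * z ^ y ≤ μ y * 1 := by
          exact mul_le_mul_of_nonneg_left (pow_le_one₀ hz0 hz1) (hnn y)
      _ = μ y := mul_one _
  have hsplit := Summable.sum_add_tsum_nat_add (f := fun y => μ y * z ^ y) (x + 1) hsz
  have htail : genFn μ z - ∑ y ∈ Finset.range (x + 1), μ y * z ^ y
      = ∑' y : ℕ, μ (y + (x + 1)) * z ^ (y + (x + 1)) := by
    rw [genFn]; linarith [hsplit]
  have hstail : Summable (fun y : ℕ => μ (y + (x + 1)) * z ^ (y + (x + 1))) :=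
    (summable_nat_add_iff (f := fun y => μ y * z ^ y) (x + 1)).mpr hsz
  have hstail' : Summable (fun y : ℕ => μ (y + (x + 1)) * z ^ (x + 1)) :=
    ((summable_nat_add_iff (f := μ) (x + 1)).mpr hs).mul_right _
  rw [htail, abs_of_nonneg (tsum_nonneg fun y =>
    mul_nonneg (hnn _) (pow_nonneg hz0 _))]
  calc ∑' y : ℕ, μ (y + (x + 1)) * z ^ (y + (x + 1))
      ≤ ∑' y : ℕ, μ (y + (x + 1)) * z ^ (x + 1) := by
        refine Summable.tsum_le_tsum (fun y => ?_) hstail hstail'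
        exact mul_le_mul_of_nonneg_left
          (pow_le_pow_of_le_one hz0 hz1 (Nat.le_add_left _ _)) (hnn _)
    _ = (∑' y : ℕ, μ (y + (x + 1))) * z ^ (x + 1) := tsum_mul_right
    _ ≤ 1 * z ^ (x + 1) := by
        refine mul_le_mul_of_nonneg_right ?_ (pow_nonneg hz0 _)
        have := Summable.sum_add_tsum_nat_add (f := μ) (x + 1) hs
        have hpart : 0 ≤ ∑ y ∈ Finset.range (x + 1), μ y :=
          Finset.sum_nonneg fun y _ => hnn y
        linarith [hsum]
    _ = z ^ (x + 1) := one_mul _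

/-- **Uniform convergence of generating functions implies uniform pointwise
convergence.** If `sup_γ |G(μₙ^γ; z) - G(ν; z)| → 0` for every `z ∈ [0,1]`,
then `sup_γ |μₙ^γ(x) - ν(x)| → 0` for every `x`. -/
theorem uniform_pointwise_from_generating_functions
    {Γ : Type*} (μ : ℕ → Γ → ℕ → ℝ) (ν : ℕ → ℝ)
    (hμ : ∀ n γ, IsProbOnPos (μ n γ)) (hν : IsProbOnPos ν)
    (h : ∀ z ∈ Set.Icc (0:ℝ) 1, ∀ ε : ℝ, 0 < ε →
      ∃ n₀ : ℕ, ∀ n : ℕ, n₀ ≤ n → ∀ γ : Γ, |genFn (μ n γ) z - genFn ν z| ≤ ε) :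
    ∀ x : ℕ, ∀ ε : ℝ, 0 < ε →
      ∃ n₀ : ℕ, ∀ n : ℕ, n₀ ≤ n → ∀ γ : Γ, |μ n γ x - ν x| ≤ ε := by
  intro x
  induction x using Nat.strong_induction_on with
  | _ x ih =>
  intro ε hε
  set z : ℝ := min (ε / 4) (1 / 2) with hzdef
  have hz0 : 0 < z := lt_min (by linarith) (by norm_num)
  have hz1 : z ≤ 1 := le_trans (min_le_right _ _) (by norm_num)
  have hzε : 2 * z ≤ ε / 2 := by
    have := min_le_left (ε / 4) (1 / 2 : ℝ); simp only [← hzdef] at this; linarith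
  have hzx : 0 < z ^ x := pow_pos hz0 x
  obtain ⟨nG, hnG⟩ := h z ⟨hz0.le, hz1⟩ (ε / 4 * z ^ x) (by positivity)
  set δ : ℝ := ε / (4 * ((x : ℝ) + 1)) * z ^ x with hδdef
  have hδ0 : 0 < δ := by positivity
  have H : ∀ y : ℕ, ∃ n₀ : ℕ, ∀ n, n₀ ≤ n → y < x → ∀ γ, |μ n γ y - ν y| ≤ δ := by
    intro y
    by_cases hy : y < x
    · obtain ⟨n₀, hn₀⟩ := ih y hy δ hδ0
      exact ⟨n₀, fun n hn _ γ => hn₀ n hn γ⟩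
    · exact ⟨0, fun n _ hy' _ => absurd hy' hy⟩
  choose g hg using H
  refine ⟨max nG ((Finset.range x).sup g), fun n hn γ => ?_⟩
  have hGb := hnG n (le_trans (le_max_left _ _) hn) γ
  have hprev : ∀ y, y < x → |μ n γ y - ν y| ≤ δ := fun y hy =>
    hg y n (le_trans (le_trans (Finset.le_sup (Finset.mem_range.mpr hy))
      (le_max_right _ _)) hn) hy γ
  have hTμ := genFn_tail (hμ n γ) hz0.le hz1 x
  have hTν := genFn_tail hν hz0.le hz1 x
  have hA : |∑ y ∈ Finset.range x, μ n γ y * z ^ y -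
      ∑ y ∈ Finset.range x, ν y * z ^ y| ≤ (x : ℝ) * δ := by
    rw [← Finset.sum_sub_distrib]
    calc |∑ y ∈ Finset.range x, (μ n γ y * z ^ y - ν y * z ^ y)|
        ≤ ∑ y ∈ Finset.range x, |μ n γ y * z ^ y - ν y * z ^ y| :=
          Finset.abs_sum_le_sum_abs _ _
      _ ≤ ∑ _y ∈ Finset.range x, δ := by
          refine Finset.sum_le_sum fun y hy => ?_
          rw [← sub_mul, abs_mul, abs_of_nonneg (pow_nonneg hz0.le y)]
          calc |μ n γ y - ν y| * z ^ y ≤ δ * 1 :=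
                mul_le_mul (hprev y (Finset.mem_range.mp hy)) (pow_le_one₀ hz0.le hz1)
                  (pow_nonneg hz0.le y) hδ0.le
            _ = δ := mul_one _
      _ = (x : ℝ) * δ := by rw [Finset.sum_const, Finset.card_range, nsmul_eq_mul]
  have hid : (μ n γ x - ν x) * z ^ x =
      (genFn (μ n γ) z - genFn ν z)
      - ((genFn (μ n γ) z - ∑ y ∈ Finset.range (x + 1), μ n γ y * z ^ y)
         - (genFn ν z - ∑ y ∈ Finset.range (x + 1), ν y * z ^ y))
      - (∑ y ∈ Finset.range x, μ n γ y * z ^ y -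
         ∑ y ∈ Finset.range x, ν y * z ^ y) := by
    rw [Finset.sum_range_succ, Finset.sum_range_succ]; ring
  have tri : ∀ a b c : ℝ, |a - b - c| ≤ |a| + |b| + |c| := by
    intro a b c
    have h1 : |a - b - c| ≤ |a - b| + |c| := by
      rw [sub_eq_add_neg (a - b) c]
      exact (abs_add_le _ _).trans (by rw [abs_neg])
    have h2 : |a - b| ≤ |a| + |b| := by
      rw [sub_eq_add_neg]
      exact (abs_add_le _ _).trans (by rw [abs_neg])
    linarith
  have htri : |(genFn (μ n γ) z - genFn ν z)
      - ((genFn (μ n γ) z - ∑ y ∈ Finset.range (x + 1), μ n γ y * z ^ y)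
         - (genFn ν z - ∑ y ∈ Finset.range (x + 1), ν y * z ^ y))
      - (∑ y ∈ Finset.range x, μ n γ y * z ^ y -
         ∑ y ∈ Finset.range x, ν y * z ^ y)|
      ≤ |genFn (μ n γ) z - genFn ν z|
        + |(genFn (μ n γ) z - ∑ y ∈ Finset.range (x + 1), μ n γ y * z ^ y)
           - (genFn ν z - ∑ y ∈ Finset.range (x + 1), ν y * z ^ y)|
        + |∑ y ∈ Finset.range x, μ n γ y * z ^ y -
           ∑ y ∈ Finset.range x, ν y * z ^ y| := tri _ _ _
  have hT2 : |(genFn (μ n γ) z - ∑ y ∈ Finset.range (x + 1), μ n γ y * z ^ y)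
      - (genFn ν z - ∑ y ∈ Finset.range (x + 1), ν y * z ^ y)| ≤ 2 * z ^ (x + 1) := by
    have h2 : |(genFn (μ n γ) z - ∑ y ∈ Finset.range (x + 1), μ n γ y * z ^ y)
        - (genFn ν z - ∑ y ∈ Finset.range (x + 1), ν y * z ^ y)|
        ≤ |genFn (μ n γ) z - ∑ y ∈ Finset.range (x + 1), μ n γ y * z ^ y|
          + |genFn ν z - ∑ y ∈ Finset.range (x + 1), ν y * z ^ y| := by
      rw [sub_eq_add_neg]
      exact (abs_add_le _ _).trans (by rw [abs_neg])
    linarith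
  have hxδ : (x : ℝ) * δ ≤ ε / 4 * z ^ x := by
    rw [hδdef, ← mul_assoc]
    refine mul_le_mul_of_nonneg_right ?_ (pow_nonneg hz0.le x)
    have hx1 : (0 : ℝ) < (x : ℝ) + 1 := by positivity
    calc (x : ℝ) * (ε / (4 * ((x : ℝ) + 1)))
        ≤ ((x : ℝ) + 1) * (ε / (4 * ((x : ℝ) + 1))) := by
          apply mul_le_mul_of_nonneg_right (by linarith) (by positivity)
      _ = ε / 4 := by field_simp
  have hzz : z ^ (x + 1) = z * z ^ x := by ring
  have hfinal : |μ n γ x - ν x| * z ^ x ≤ ε * z ^ x := by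
    rw [← abs_of_nonneg (pow_nonneg hz0.le x) (a := z ^ x), ← abs_mul, hid,
      abs_of_nonneg (pow_nonneg hz0.le x)]
    calc _ ≤ _ := htri
      _ ≤ ε / 4 * z ^ x + 2 * z ^ (x + 1) + (x : ℝ) * δ := by linarith
      _ ≤ ε / 4 * z ^ x + (ε / 2) * z ^ x + ε / 4 * z ^ x := by
          rw [hzz, ← mul_assoc]
          have : 2 * z * z ^ x ≤ ε / 2 * z ^ x :=
            mul_le_mul_of_nonneg_right hzε (pow_nonneg hz0.le x)
          linarith
      _ = ε * z ^ x := by ring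
  exact le_of_mul_le_mul_right hfinal hzx

end
end
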